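/- Let A be an m×m real matrix with nonnegative off-diagonal entries. If v : [0,∞) → ℝ^m is differentiable and satisfies the componentwise differential inequality v'(t) ≤ A v(t) for all t ≥ 0, and r solves r'(t) = A r(t) with r(0) = v(0), then v(t) ≤ r(t) componentwise for all t ≥ 0. -/

import Mathlib

open Filter Topology

lemma deriv_nonpos_of_left_pos {f : ℝ → ℝ} {t d : ℝ} (ht : 0 < t)
    (hf : HasDerivAt f d t) (hpos : ∀ s, 0 ≤ s → s < t → 0 < f s)
    (hft : f t = 0) : d ≤ 0 := by
  by_contra hd
  push_neg at hd
  have hslope : Tendsto (slope f t) (𝓝[<] t) (𝓝 d) :=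
    (hasDerivAt_iff_tendsto_slope.1 hf).mono_left
      (nhdsWithin_mono _ (fun x hx => ne_of_lt hx))
  have h1 : ∀ᶠ s in 𝓝[<] t, 0 < slope f t s :=
    hslope.eventually (eventually_gt_nhds hd)
  have h2 : ∀ᶠ s in 𝓝[<] t, s ∈ Set.Ioo 0 t :=
    Ioo_mem_nhdsLT_of_mem ⟨ht, le_refl t⟩
  obtain ⟨s, hs1, hs2⟩ := (h1.and h2).exists
  have hfs : 0 < f s := hpos s hs2.1.le hs2.2
  have : slope f t s < 0 := by
    rw [slope_def_field, hft]
    apply div_neg_of_pos_of_neg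
    · simpa using hfs
    · linarith [hs2.2]
  linarith

/-- Linear comparison principle: if `A` is Metzler, `v` satisfies the componentwise
differential inequality `v' ≤ A v` on `[0,∞)`, and `r` solves `r' = A r` with
`r 0 = v 0`, then `v t ≤ r t` componentwise for all `t ≥ 0`. -/
theorem stmt_2 {m : ℕ} (A : Matrix (Fin m) (Fin m) ℝ)
    (hMetzler : ∀ i j, i ≠ j → 0 ≤ A i j)
    (v v' r : ℝ → Fin m → ℝ)
    (hv : ∀ t, 0 ≤ t → ∀ i, HasDerivAt (fun s => v s i) (v' t i) t)
    (hineq : ∀ t, 0 ≤ t → ∀ i, v' t i ≤ A.mulVec (v t) i)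
    (hr : ∀ t, 0 ≤ t → ∀ i, HasDerivAt (fun s => r s i) (A.mulVec (r t) i) t)
    (h0 : r 0 = v 0) :
    ∀ t, 0 ≤ t → ∀ i, v t i ≤ r t i := by
  intro t ht i
  by_contra hcon
  push_neg at hcon
  set K : ℝ := (∑ a, ∑ b, |A a b|) + 1 with hKdef
  have hK : ∀ a, (∑ b, A a b) < K := by
    intro a
    have h1 : (∑ b, A a b) ≤ ∑ b, |A a b| :=
      Finset.sum_le_sum (fun b _ => le_abs_self _)
    have h2 : (∑ b, |A a b|) ≤ ∑ a, ∑ b, |A a b| := by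
      apply Finset.single_le_sum (f := fun a => ∑ b, |A a b|)
        (fun c _ => Finset.sum_nonneg (fun b _ => abs_nonneg _)) (Finset.mem_univ a)
    simp only [hKdef]; linarith
  set ε : ℝ := (v t i - r t i) / (2 * Real.exp (K * t)) with hεdef
  have hexp : (0:ℝ) < Real.exp (K * t) := Real.exp_pos _
  have hε : 0 < ε := by
    apply div_pos (by linarith) (by linarith)
  set u : ℝ → Fin m → ℝ := fun s j => r s j - v s j + ε * Real.exp (K * s) with hudef
  -- continuity of components of u
  have hu_cont : ∀ s, 0 ≤ s → ∀ j, ContinuousAt (fun x => u x j) s := by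
    intro s hs j
    exact (((hr s hs j).continuousAt.sub (hv s hs j).continuousAt).add
      ((Real.continuous_exp.comp (continuous_const.mul continuous_id)).continuousAt.const_smul ε))
  -- main claim
  have main : ∀ s, 0 ≤ s → s ≤ t → ∀ j, 0 < u s j := by
    by_contra hB
    push_neg at hB
    obtain ⟨s₀, hs₀0, hs₀t, j₀, hj₀⟩ := hB
    set B : Set ℝ := {s | 0 ≤ s ∧ s ≤ t ∧ ∃ j, u s j ≤ 0} with hBdef
    have hBne : B.Nonempty := ⟨s₀, hs₀0, hs₀t, j₀, hj₀⟩
    have hBbd : BddBelow B := ⟨0, fun x hx => hx.1⟩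
    set ts : ℝ := sInf B with htsdef
    have hts0 : 0 ≤ ts := le_csInf hBne (fun x hx => hx.1)
    have htst : ts ≤ t := le_trans (csInf_le hBbd hBne.choose_spec) hBne.choose_spec.2.1
    -- Step A : some component of u at ts is ≤ 0
    have stepA : ∃ j, u ts j ≤ 0 := by
      by_contra hA
      push_neg at hA
      have hev : ∀ᶠ x in 𝓝 ts, ∀ j, 0 < u x j := by
        rw [eventually_all]
        intro j
        exact (hu_cont ts hts0 j).eventually (eventually_gt_nhds (hA j))
      obtain ⟨δ, hδ, hδall⟩ := Metric.eventually_nhds_iff.1 hev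
      have : sInf B < ts + δ := by linarith
      obtain ⟨b, hbB, hbl⟩ := (csInf_lt_iff hBbd hBne).1 this
      have hbts : ts ≤ b := csInf_le hBbd hbB
      have : ∀ j, 0 < u b j := hδall (by rw [Real.dist_eq, abs_lt]; constructor <;> linarith)
      obtain ⟨j, hj⟩ := hbB.2.2
      exact absurd (this j) (not_lt.2 hj)
    obtain ⟨j₁, hj₁⟩ := stepA
    -- Step B : ts > 0
    have hu0 : ∀ j, u 0 j = ε := by
      intro j; simp [hudef, h0]
    have htspos : 0 < ts := by
      rcases lt_or_eq_of_le hts0 with h | h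
      · exact h
      · exfalso
        rw [← h, hu0 j₁] at hj₁
        linarith
    -- Step C : positivity strictly before ts
    have stepC : ∀ s, 0 ≤ s → s < ts → ∀ j, 0 < u s j := by
      intro s hs hst j
      by_contra hcj
      push_neg at hcj
      have : s ∈ B := ⟨hs, le_trans hst.le htst, j, hcj⟩
      exact absurd (csInf_le hBbd this) (not_le.2 hst)
    -- Step D : nonnegativity at ts
    have stepD : ∀ j, 0 ≤ u ts j := by
      intro j
      have htend : Tendsto (fun x => u x j) (𝓝[<] ts) (𝓝 (u ts j)) :=
        ((hu_cont ts hts0 j).tendsto).mono_left nhdsWithin_le_nhds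
      refine ge_of_tendsto htend ?_
      filter_upwards [Ioo_mem_nhdsLT_of_mem (Set.mem_Ioc.2 ⟨htspos, le_refl ts⟩)] with x hx
      exact (stepC x hx.1.le hx.2 j).le
    have hj₁0 : u ts j₁ = 0 := le_antisymm hj₁ (stepD j₁)
    -- Step E : derivative of u · j₁ at ts is positive, contradiction
    set E : ℝ := Real.exp (K * ts) with hEdef
    have hEpos : 0 < E := Real.exp_pos _
    have hexp_deriv : HasDerivAt (fun s => ε * Real.exp (K * s)) (ε * (Real.exp (K * ts) * K)) ts := by
      simpa using (((hasDerivAt_id ts).const_mul K).exp).const_mul ε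
    have hd : HasDerivAt (fun s => u s j₁)
        (A.mulVec (r ts) j₁ - v' ts j₁ + ε * (E * K)) ts :=
      ((hr ts hts0 j₁).sub (hv ts hts0 j₁)).add hexp_deriv
    -- lower bound on the derivative
    have hsum : A.mulVec (r ts) j₁ - A.mulVec (v ts) j₁
        = (∑ j, A j₁ j * u ts j) - (∑ j, A j₁ j) * (ε * E) := by
      simp only [Matrix.mulVec, dotProduct, hudef, hEdef]
      rw [← Finset.sum_sub_distrib, Finset.sum_mul, ← Finset.sum_sub_distrib]
      apply Finset.sum_congr rfl
      intro j _
      ring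
    have hsumpos : 0 ≤ ∑ j, A j₁ j * u ts j := by
      apply Finset.sum_nonneg
      intro j _
      rcases eq_or_ne j j₁ with h | h
      · rw [h, hj₁0, mul_zero]
      · exact mul_nonneg (hMetzler j₁ j (Ne.symm h)) (stepD j)
    have hdpos : 0 < A.mulVec (r ts) j₁ - v' ts j₁ + ε * (E * K) := by
      have h1 : v' ts j₁ ≤ A.mulVec (v ts) j₁ := hineq ts hts0 j₁
      have h2 : (∑ j, A j₁ j) * (ε * E) < K * (ε * E) :=
        (mul_lt_mul_of_pos_right (hK j₁) (mul_pos hε hEpos))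
      nlinarith [hsum, hsumpos]
    have := deriv_nonpos_of_left_pos htspos hd
      (fun s hs hst => stepC s hs hst j₁) hj₁0
    linarith
  -- conclude
  have hm := main t ht (le_refl t) i
  have hut : u t i = r t i - v t i + ε * Real.exp (K * t) := rfl
  have hεe : ε * Real.exp (K * t) = (v t i - r t i) / 2 := by
    rw [hεdef]; field_simp
  rw [hut, hεe] at hm
  linarith
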